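/- Let T be a tree with extended space X = T ∪ ∂T in the shadow topology, and suppose a group Γ acts on T by automorphisms with minimal, strongly hyperbolic action (so ∂T‾ is a Γ-boundary). If an edge e of T and g ∈ Γ are such that g fixes Z_B(e) pointwise, then g fixes the entire extended shadow Z(e) pointwise. Consequently the fixator subgroups of Z_0(e), Z_B(e), and Z(e) ∩ ∂T‾ coincide. -/

import Mathlib

namespace TreeStmt

variable {V : Type*} (G : SimpleGraph V)

/-- A ray in a graph: a sequence of vertices with `d(r_i, r_{i+n}) = n`. -/
def IsRay (r : ℕ → V) : Prop := ∀ i n : ℕ, G.dist (r i) (r (i + n)) = n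

/-- Two rays are cofinal if they eventually agree after shifts. -/
def Cofinal (r s : ℕ → V) : Prop := ∃ k n : ℕ, ∀ i : ℕ, r (i + k) = s (i + n)

/-- A ray passes through the (oriented) edge `(u, v)`. -/
def Through (r : ℕ → V) (u v : V) : Prop := ∃ j : ℕ, r j = u ∧ r (j + 1) = v

/-- The cofinality class of the ray `r` belongs to the boundary shadow `Z_B(u,v)`:
some ray cofinal to `r` passes through the edge `(u, v)`. -/
def InZB (r : ℕ → V) (u v : V) : Prop :=
  ∃ s : ℕ → V, IsRay G s ∧ Cofinal r s ∧ Through s u v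

/-- The shadow of an edge `(u, v)`: vertices strictly closer to `v` than to `u`. -/
def Z0 (u v : V) : Set V := {w : V | G.dist w v < G.dist w u}


/-- The boundary `∂T`: cofinality classes of rays. -/
def Boundary : Type _ := Quot (fun r s : {r : ℕ → V // IsRay G r} => Cofinal r.1 s.1)

/-- The boundary shadow `Z_B(u,v)` as a subset of `∂T`. -/
def ZB (u v : V) : Set (Boundary G) :=
  {x : Boundary G | ∃ r : {r : ℕ → V // IsRay G r}, x = Quot.mk _ r ∧ InZB G r.1 u v}

/-- The extended space `T ∪ ∂T`. -/
def Ext : Type _ := V ⊕ Boundary G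

/-- The extended shadow `Z(u,v) = Z_0(u,v) ∪ Z_B(u,v)` inside `T ∪ ∂T`. -/
def Z (u v : V) : Set (Ext G) :=
  Sum.inl '' Z0 G u v ∪ Sum.inr '' ZB G u v

/-- The shadow topology on `T ∪ ∂T`, generated by the extended shadows. -/
def shadowTopology : TopologicalSpace (Ext G) :=
  TopologicalSpace.generateFrom {S : Set (Ext G) | ∃ u v : V, G.Adj u v ∧ S = Z G u v}

variable {Γ : Type*} [Group Γ] [MulAction Γ V]

/-- A distance-preserving group action on the vertices maps rays to rays. -/
def rayAct (hd : ∀ (g : Γ) (u v : V), G.dist (g • u) (g • v) = G.dist u v)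
    (g : Γ) (r : {r : ℕ → V // IsRay G r}) : {r : ℕ → V // IsRay G r} :=
  ⟨fun i => g • r.1 i, fun i n => (hd g _ _).trans (r.2 i n)⟩

/-- The induced action of `g` on the boundary `∂T`. -/
def bAct (hd : ∀ (g : Γ) (u v : V), G.dist (g • u) (g • v) = G.dist u v)
    (g : Γ) : Boundary G → Boundary G :=
  Quot.map (rayAct G hd g) (by
    rintro r s ⟨k, n, hkn⟩
    exact ⟨k, n, fun i => congrArg (fun y => g • y) (hkn i)⟩)

/-- The induced action of `g` on the extended space `T ∪ ∂T`. -/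
def extAct (hd : ∀ (g : Γ) (u v : V), G.dist (g • u) (g • v) = G.dist u v)
    (g : Γ) : Ext G → Ext G :=
  Sum.map (fun v => g • v) (bAct G hd g)

/-- `g` is a hyperbolic automorphism: it fixes no vertex and inverts no edge. -/
def Hyperbolic (g : Γ) : Prop :=
  (∀ v : V, g • v ≠ v) ∧ ∀ u v : V, G.Adj u v → ¬(g • u = v ∧ g • v = u)

end TreeStmt

open TreeStmt


namespace Stmt18Aux

open SimpleGraph TreeStmt

variable {V : Type*} {G : SimpleGraph V}

/-- In a connected graph, from `x ≠ y` there is a neighbor of `x` one step closer to `y`. -/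
lemma exists_child (hc : G.Connected) {x y : V} (h : x ≠ y) :
    ∃ z, G.Adj x z ∧ G.dist z y + 1 = G.dist x y := by
  have hpos : 0 < G.dist x y := hc.pos_dist_of_ne h
  obtain ⟨p, hp⟩ := hc.exists_walk_length_eq_dist x y
  cases p with
  | nil => exact absurd rfl h
  | cons hadj q =>
    rename_i z
    refine ⟨z, hadj, ?_⟩
    have h1 : G.dist z y ≤ q.length := dist_le q
    have h2 : G.dist x y ≤ 1 + G.dist z y := by
      have := hc.dist_triangle (u := x) (v := z) (w := y)
      have : G.dist x z ≤ 1 := by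
        simpa using dist_le hadj.toWalk
      omega
    simp only [Walk.length_cons] at hp
    omega

lemma dist_le_of_mem_support {x y w : V} (p : G.Walk x y) (hw : w ∈ p.support) :
    G.dist x w ≤ p.length := by
  classical
  have h1 := Walk.length_takeUntil_le p hw
  exact le_trans (dist_le _) h1

lemma mem_support_bound {x y w : V} (p : G.Walk x y) (hw : w ∈ p.support) (hwy : w ≠ y)
    (hp : p.length = G.dist x y) : G.dist x w + 1 ≤ G.dist x y := by
  classical
  have hc : G.Reachable w y := Walk.reachable (p.dropUntil w hw)
  have h2 : G.dist w y ≤ (p.dropUntil w hw).length := dist_le _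
  have h3 : (p.takeUntil w hw).length + (p.dropUntil w hw).length = p.length := by
    have h := congrArg Walk.length (p.take_spec hw)
    rwa [Walk.length_append] at h
  have h4 : G.dist x w ≤ (p.takeUntil w hw).length := dist_le _
  have h5 : 0 < G.dist w y := hc.pos_dist_of_ne hwy
  omega

/-- Parity: in a tree, neighbors have different distances to any vertex. -/
lemma adj_dist_ne (hT : G.IsTree) (x : V) {y z : V} (hyz : G.Adj y z) :
    G.dist x y ≠ G.dist x z := by
  intro hEq
  have hc := hT.isConnected
  by_cases hxy : x = y
  · subst hxy
    have : G.dist x z = 0 := by rw [← hEq]; simp [SimpleGraph.dist_self]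
    have : x = z := (hc.dist_eq_zero_iff).mp this
    subst this
    exact G.irrefl hyz
  · obtain ⟨P, hPpath, hPlen⟩ := hc.exists_path_of_dist x y
    have hzsupp : z ∉ P.support := by
      intro hmem
      have hzy : z ≠ y := fun h => G.irrefl (h ▸ hyz)
      have := mem_support_bound P hmem hzy hPlen
      omega
    have hQ : (P.concat hyz).IsPath := by
      have : (P.concat hyz).reverse.IsPath := by
        rw [Walk.reverse_concat]
        exact Walk.IsPath.cons hPpath.reverse (by
          rw [Walk.support_reverse]; simpa using hzsupp)
      simpa only [Walk.reverse_reverse] using this.reverse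
    obtain ⟨R, hRpath, hRlen⟩ := hc.exists_path_of_dist x z
    have := (hT.existsUnique_path x z).unique hQ hRpath
    have hlen : (P.concat hyz).length = R.length := by rw [this]
    rw [Walk.length_concat, hPlen, hRlen] at hlen
    omega

/-- Unique parent: in a tree, a vertex has at most one neighbor strictly closer to `x`. -/
lemma parent_unique (hT : G.IsTree) (x : V) {y z₁ z₂ : V} (h1 : G.Adj y z₁) (h2 : G.Adj y z₂)
    (hd1 : G.dist x z₁ + 1 = G.dist x y) (hd2 : G.dist x z₂ + 1 = G.dist x y) : z₁ = z₂ := by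
  have hc := hT.isConnected
  by_cases hx1 : x = z₁
  · subst hx1
    have : G.dist x z₂ = 0 := by
      have : G.dist x x = 0 := SimpleGraph.dist_self
      omega
    exact ((hc.dist_eq_zero_iff).mp this).symm ▸ rfl
  · by_cases hx2 : x = z₂
    · subst hx2
      have : G.dist x z₁ = 0 := by
        have : G.dist x x = 0 := SimpleGraph.dist_self
        omega
      exact ((hc.dist_eq_zero_iff).mp this)|>.symm
    · obtain ⟨P₁, hP₁path, hP₁len⟩ := hc.exists_path_of_dist x z₁
      obtain ⟨P₂, hP₂path, hP₂len⟩ := hc.exists_path_of_dist x z₂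
      have hy1 : y ∉ P₁.support := by
        intro hmem
        have := dist_le_of_mem_support P₁ hmem
        omega
      have hy2 : y ∉ P₂.support := by
        intro hmem
        have := dist_le_of_mem_support P₂ hmem
        omega
      have hQ₁ : (P₁.concat h1.symm).IsPath := by
        have : (P₁.concat h1.symm).reverse.IsPath := by
          rw [Walk.reverse_concat]
          exact Walk.IsPath.cons hP₁path.reverse (by
            rw [Walk.support_reverse]; simpa using hy1)
        simpa only [Walk.reverse_reverse] using this.reverse
      have hQ₂ : (P₂.concat h2.symm).IsPath := by
        have : (P₂.concat h2.symm).reverse.IsPath := by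
          rw [Walk.reverse_concat]
          exact Walk.IsPath.cons hP₂path.reverse (by
            rw [Walk.support_reverse]; simpa using hy2)
        simpa only [Walk.reverse_reverse] using this.reverse
      have hEq := (hT.existsUnique_path x y).unique hQ₁ hQ₂
      have hsupp : (P₁.concat h1.symm).support = (P₂.concat h2.symm).support := by rw [hEq]
      rw [Walk.support_concat, Walk.support_concat] at hsupp
      have hsupp' : P₁.support = P₂.support := by
        have h := congrArg List.dropLast hsupp
        simpa [List.dropLast_concat] using h
      have h1' : P₁.reverse.support = z₁ :: P₁.reverse.support.tail := Walk.support_eq_cons _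
      have h2' : P₂.reverse.support = z₂ :: P₂.reverse.support.tail := Walk.support_eq_cons _
      have : P₁.reverse.support = P₂.reverse.support := by
        rw [Walk.support_reverse, Walk.support_reverse, hsupp']
      rw [h1', h2'] at this
      exact (List.cons.injEq _ _ _ _ ▸ this).1


/-- Distances along a geodesic sequence based at `x`. -/
lemma seq_dist (hc : G.Connected) {x : V} {f : ℕ → V} (hf : ∀ i, G.dist x (f i) = i)
    (hadj : ∀ i, G.Adj (f i) (f (i + 1))) : ∀ i n, G.dist (f i) (f (i + n)) = n := by
  intro i n
  have hle : ∀ m, G.dist (f i) (f (i + m)) ≤ m := by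
    intro m
    induction m with
    | zero => simp [SimpleGraph.dist_self]
    | succ m ihm =>
      have h1 : G.dist (f i) (f (i + m + 1)) ≤ G.dist (f i) (f (i + m)) + G.dist (f (i + m)) (f (i + m + 1)) :=
        hc.dist_triangle
      have h2 : G.dist (f (i + m)) (f (i + m + 1)) ≤ 1 := by simpa using dist_le (hadj (i + m)).toWalk
      have : i + m + 1 = i + (m + 1) := by omega
      rw [this] at h1 h2
      omega
  have hge : i + n ≤ i + G.dist (f i) (f (i + n)) := by
    have h1 : G.dist x (f (i + n)) ≤ G.dist x (f i) + G.dist (f i) (f (i + n)) := hc.dist_triangle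
    rw [hf, hf] at h1
    omega
  have := hle n
  omega

/-- Divergence: two geodesic rays based at `x` which agree up to `m` and differ at `m+1`. -/
lemma seq_div (hT : G.IsTree) {x : V} {f f' : ℕ → V}
    (hf : ∀ i, G.dist x (f i) = i) (hadjf : ∀ i, G.Adj (f i) (f (i + 1)))
    (hf' : ∀ i, G.dist x (f' i) = i) (hadjf' : ∀ i, G.Adj (f' i) (f' (i + 1)))
    (m : ℕ) (hag : ∀ i ≤ m, f i = f' i) (hdiv : f (m + 1) ≠ f' (m + 1)) :
    ∀ p q, G.dist (f (m + p)) (f' (m + q)) = p + q := by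
  have hc := hT.isConnected
  have hdf := seq_dist hc hf hadjf
  have hdf' := seq_dist hc hf' hadjf'
  intro p q
  suffices h : ∀ q, G.dist (f (m + p)) (f' (m + q)) = p + q ∧
      G.dist (f (m + p)) (f' (m + q + 1)) = p + q + 1 from (h q).1
  have hA0 : G.Adj (f m) (f' (m + 1)) := by
    have h := hadjf' m
    rwa [← hag m le_rfl] at h
  intro q
  induction q with
  | zero =>
    rw [Nat.add_zero, Nat.add_zero]
    have hfirst : G.dist (f (m + p)) (f' m) = p := by
      rw [← hag m le_rfl, SimpleGraph.dist_comm]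
      exact hdf m p
    refine ⟨hfirst, ?_⟩
    rcases Nat.eq_zero_or_pos p with hp | hp
    · subst hp
      rw [Nat.add_zero, hag m le_rfl]
      exact hdf' m 1
    · have hXz : G.dist (f (m + p)) (f' (m + 1)) ≠ p := by
        have h := adj_dist_ne hT (f (m + p)) hA0
        rw [SimpleGraph.dist_comm (u := f (m+p)) (v := f m)] at h
        have h2 : G.dist (f m) (f (m + p)) = p := hdf m p
        omega
      have hfm : G.dist (f (m + p)) (f m) = p := by
        rw [SimpleGraph.dist_comm]; exact hdf m p
      have hd1 : G.dist (f m) (f' (m + 1)) ≤ 1 := by simpa using dist_le hA0.toWalk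
      have htri1 : G.dist (f (m+p)) (f' (m+1)) ≤ G.dist (f (m+p)) (f m) + G.dist (f m) (f' (m+1)) := hc.dist_triangle
      have htri2 : G.dist (f (m+p)) (f m) ≤ G.dist (f (m+p)) (f' (m+1)) + G.dist (f' (m+1)) (f m) := hc.dist_triangle
      have hd2 : G.dist (f' (m + 1)) (f m) ≤ 1 := by
        rw [SimpleGraph.dist_comm]; exact hd1
      by_cases hcase : G.dist (f (m + p)) (f' (m + 1)) + 1 = p
      · exfalso
        have hfm1 : G.dist (f (m + p)) (f (m + 1)) + 1 = p := by
          have h := hdf (m + 1) (p - 1)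
          rw [show m + 1 + (p - 1) = m + p by omega] at h
          rw [SimpleGraph.dist_comm]; omega
        have : f' (m + 1) = f (m + 1) :=
          parent_unique hT (f (m + p)) hA0 (hadjf m) (by omega) (by omega)
        exact hdiv this.symm
      · omega
  | succ q ihq =>
    obtain ⟨ih1, ih2⟩ := ihq
    rw [show m + (q + 1) = m + q + 1 by omega, show p + (q + 1) = p + q + 1 by omega]
    refine ⟨ih2, ?_⟩
    rw [show m + q + 1 + 1 = m + q + 2 by omega, show p + q + 1 + 1 = p + q + 2 by omega]
    have hA : G.Adj (f' (m + q + 1)) (f' (m + q + 2)) := by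
      have h := hadjf' (m + q + 1)
      rwa [show m + q + 1 + 1 = m + q + 2 by omega] at h
    have hne : G.dist (f (m + p)) (f' (m + q + 2)) ≠ p + q + 1 := by
      have h := adj_dist_ne hT (f (m + p)) hA
      omega
    have hd1 : G.dist (f' (m + q + 1)) (f' (m + q + 2)) ≤ 1 := by simpa using dist_le hA.toWalk
    have hd2 : G.dist (f' (m + q + 2)) (f' (m + q + 1)) ≤ 1 := by
      rw [SimpleGraph.dist_comm]; exact hd1
    have htri1 : G.dist (f (m+p)) (f' (m+q+2)) ≤ G.dist (f (m+p)) (f' (m+q+1)) + G.dist (f' (m+q+1)) (f' (m+q+2)) := hc.dist_triangle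
    have htri2 : G.dist (f (m+p)) (f' (m+q+1)) ≤ G.dist (f (m+p)) (f' (m+q+2)) + G.dist (f' (m+q+2)) (f' (m+q+1)) := hc.dist_triangle
    by_cases hcase : G.dist (f (m + p)) (f' (m + q + 2)) + 1 = p + q + 1
    · exfalso
      have hA2 : G.Adj (f' (m + q + 1)) (f' (m + q)) := (hadjf' (m + q)).symm
      have heq : f' (m + q + 2) = f' (m + q) :=
        parent_unique hT (f (m + p)) hA hA2 (by omega) (by omega)
      have h2 : G.dist (f' (m + q)) (f' (m + q + 2)) = 2 := hdf' (m + q) 2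
      rw [heq] at h2
      have : G.dist (f' (m+q)) (f' (m+q)) = 0 := SimpleGraph.dist_self
      omega
    · omega


/-- Build a geodesic ray extending a geodesic prefix, in a tree without leaves. -/
lemma mkRay (hext : ∀ x y : V, ∃ z, G.Adj y z ∧ G.dist x z = G.dist x y + 1)
    (x : V) (f₀ : ℕ → V) (a : ℕ)
    (h0 : ∀ i, i ≤ a → G.dist x (f₀ i) = i)
    (h1 : ∀ i, i + 1 ≤ a → G.Adj (f₀ i) (f₀ (i + 1))) :
    ∃ f : ℕ → V, (∀ i, i ≤ a → f i = f₀ i) ∧ (∀ i, G.dist x (f i) = i) ∧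
      (∀ i, G.Adj (f i) (f (i + 1))) := by
  classical
  let e : ℕ → V := fun n => Nat.rec (f₀ a) (fun _ y => (hext x y).choose) n
  have hes : ∀ n, e (n + 1) = (hext x (e n)).choose := fun n => rfl
  have headj : ∀ n, G.Adj (e n) (e (n + 1)) := fun n => ((hext x (e n)).choose_spec).1
  have hedist : ∀ n, G.dist x (e n) = a + n := by
    intro n; induction n with
    | zero => exact h0 a le_rfl
    | succ n ihn =>
      rw [hes n]
      have := ((hext x (e n)).choose_spec).2
      omega
  refine ⟨fun i => if i ≤ a then f₀ i else e (i - a), fun i hi => by simp [hi], ?_, ?_⟩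
  · intro i
    by_cases hi : i ≤ a
    · simp [hi]; exact h0 i hi
    · simp only [hi, if_false]
      rw [hedist]
      omega
  · intro i
    by_cases hi : i + 1 ≤ a
    · simp [hi, le_of_lt (Nat.lt_of_succ_le hi)]
      exact h1 i hi
    · by_cases hi2 : i ≤ a
      · have : i = a := by omega
        subst this
        simp only [le_rfl, if_true, hi, if_false]
        have h := headj 0
        have : i + 1 - i = 1 := by omega
        rw [this]
        exact h
      · simp only [hi, hi2, if_false]
        have : i + 1 - a = (i - a) + 1 := by omega
        rw [this]
        exact headj (i - a)

/-- Convex subsets containing both endpoints are connected along geodesics. -/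
lemma reach_of_conv (hc : G.Connected) {S : Set V} :
    ∀ n (x y : V) (hx : x ∈ S) (hy : y ∈ S),
      (∀ p, G.dist x p + G.dist p y = G.dist x y → p ∈ S) →
      G.dist x y ≤ n → (G.induce S).Reachable ⟨x, hx⟩ ⟨y, hy⟩ := by
  intro n
  induction n with
  | zero =>
    intro x y hx hy _ hdist
    have : x = y := (hc.dist_eq_zero_iff).mp (by omega)
    subst this
    rfl
  | succ n ih =>
    intro x y hx hy hconv hdist
    by_cases hxy : x = y
    · subst hxy; rfl
    · obtain ⟨z, hzadj, hz⟩ := exists_child hc hxy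
      have hdxz : G.dist x z = 1 := by simp [hzadj]
      have hzS : z ∈ S := hconv z (by
        rw [hdxz]
        have : G.dist z y + 1 = G.dist x y := hz
        omega)
      have hadj' : (G.induce S).Adj ⟨x, hx⟩ ⟨z, hzS⟩ := hzadj
      have hzy : G.dist z y ≤ n := by omega
      have hconv' : ∀ p, G.dist z p + G.dist p y = G.dist z y → p ∈ S := by
        intro p hp
        apply hconv p
        have h1 : G.dist x p ≤ G.dist x z + G.dist z p := hc.dist_triangle
        have h2 : G.dist x y ≤ G.dist x p + G.dist p y := hc.dist_triangle
        omega
      exact (hadj'.reachable).trans (ih z y hzS hy hconv' hzy)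

variable {Γ : Type*} [Group Γ] [MulAction Γ V]

/-- Every vertex of a minimal tree with a hyperbolic element has two distinct neighbors. -/
lemma two_nbrs (hT : G.IsTree)
    (hadj : ∀ (g : Γ) (u v : V), G.Adj u v → G.Adj (g • u) (g • v))
    (hmin : ∀ S : Set V, S.Nonempty → (∀ (g : Γ), ∀ v ∈ S, g • v ∈ S) →
      (G.induce S).Connected → S = Set.univ)
    (u v : V) (he : G.Adj u v) (g₁ : Γ) (hg₁ : Hyperbolic G g₁) :
    ∀ y : V, ∃ z₁ z₂, z₁ ≠ z₂ ∧ G.Adj y z₁ ∧ G.Adj y z₂ := by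
  have hc := hT.isConnected
  set S₂ : Set V := {x | ∃ z₁ z₂, z₁ ≠ z₂ ∧ G.Adj x z₁ ∧ G.Adj x z₂} with hS₂
  by_cases hne : S₂.Nonempty
  · have hSuniv : S₂ = Set.univ := by
      apply hmin S₂ hne
      · rintro g x ⟨z₁, z₂, hz, h1, h2⟩
        exact ⟨g • z₁, g • z₂, fun h => hz (MulAction.injective g h), hadj g _ _ h1, hadj g _ _ h2⟩
      · rw [connected_iff]
        refine ⟨?_, ⟨⟨hne.choose, hne.choose_spec⟩⟩⟩
        rintro ⟨x, hx⟩ ⟨y, hy⟩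
        apply reach_of_conv hc (G.dist x y) x y hx hy _ le_rfl
        intro p hp
        by_cases hpx : p = x
        · subst hpx; exact hx
        · by_cases hpy : p = y
          · subst hpy; exact hy
          · obtain ⟨c₁, hc₁adj, hc₁⟩ := exists_child hc hpx
            obtain ⟨c₂, hc₂adj, hc₂⟩ := exists_child hc hpy
            refine ⟨c₁, c₂, ?_, hc₁adj, hc₂adj⟩
            intro hcc
            subst hcc
            have h1 : G.dist x y ≤ G.dist x c₁ + G.dist c₁ y := hc.dist_triangle
            have h2 : G.dist x c₁ = G.dist c₁ x := SimpleGraph.dist_comm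
            have h3 : G.dist x p = G.dist p x := SimpleGraph.dist_comm
            omega
    intro y
    have : y ∈ S₂ := hSuniv ▸ Set.mem_univ y
    exact this
  · exfalso
    have hemp : ∀ x z₁ z₂ : V, G.Adj x z₁ → G.Adj x z₂ → z₁ = z₂ := by
      intro x z₁ z₂ h1 h2
      by_contra hne'
      exact hne ⟨x, z₁, z₂, hne', h1, h2⟩
    have hclaim : ∀ n x, G.dist u x ≤ n → x = u ∨ x = v := by
      intro n
      induction n with
      | zero =>
        intro x hx
        left
        exact ((hc.dist_eq_zero_iff).mp (by omega)).symm
      | succ n ih =>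
        intro x hx
        by_cases hxn : G.dist u x ≤ n
        · exact ih x hxn
        · have hxu : x ≠ u := by
            intro h; subst h; simp [SimpleGraph.dist_self] at hxn
          obtain ⟨z, hzadj, hz⟩ := exists_child hc hxu
          have hz' : G.dist u z ≤ n := by
            have : G.dist z u = G.dist u z := SimpleGraph.dist_comm
            have : G.dist x u = G.dist u x := SimpleGraph.dist_comm
            omega
          rcases ih z hz' with h | h
          · subst h
            right
            exact hemp z x v hzadj.symm he
          · subst h
            have : x = u := hemp z x u hzadj.symm he.symm
            subst this
            simp [SimpleGraph.dist_self] at hxn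
    have h1 : g₁ • u = v := by
      rcases hclaim (G.dist u (g₁ • u)) (g₁ • u) le_rfl with h | h
      · exact absurd h (hg₁.1 u)
      · exact h
    have h2 : g₁ • v = u := by
      rcases hclaim (G.dist u (g₁ • v)) (g₁ • v) le_rfl with h | h
      · exact h
      · exact absurd h (hg₁.1 v)
    exact hg₁.2 u v he ⟨h1, h2⟩

/-- No leaves: one can always extend away from `x`. -/
lemma hext_of_two_nbrs (hT : G.IsTree)
    (h2n : ∀ y : V, ∃ z₁ z₂, z₁ ≠ z₂ ∧ G.Adj y z₁ ∧ G.Adj y z₂) :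
    ∀ x y : V, ∃ z, G.Adj y z ∧ G.dist x z = G.dist x y + 1 := by
  have hc := hT.isConnected
  intro x y
  by_cases hxy : x = y
  · subst hxy
    obtain ⟨z₁, z₂, hz, h1, h2⟩ := h2n x
    refine ⟨z₁, h1, ?_⟩
    simp [h1, SimpleGraph.dist_self]
  · have hyx : y ≠ x := Ne.symm hxy
    obtain ⟨z₀, hz₀adj, hz₀⟩ := exists_child hc hyx
    obtain ⟨z₁, z₂, hz12, h1, h2⟩ := h2n y
    obtain ⟨z, hzadj, hzz₀⟩ : ∃ z, G.Adj y z ∧ z ≠ z₀ := by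
      by_cases hq : z₁ = z₀
      · exact ⟨z₂, h2, fun h => hz12 (hq ▸ h ▸ rfl)⟩
      · exact ⟨z₁, h1, hq⟩
    refine ⟨z, hzadj, ?_⟩
    have hne := adj_dist_ne hT x hzadj
    have ht1 : G.dist x z ≤ G.dist x y + G.dist y z := hc.dist_triangle
    have ht2 : G.dist x y ≤ G.dist x z + G.dist z y := hc.dist_triangle
    have hd1 : G.dist y z ≤ 1 := by simpa using dist_le hzadj.toWalk
    have hd2 : G.dist z y ≤ 1 := by rw [SimpleGraph.dist_comm]; exact hd1
    have hz₀' : G.dist x z₀ + 1 = G.dist x y := by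
      have e1 : G.dist z₀ x = G.dist x z₀ := SimpleGraph.dist_comm
      have e2 : G.dist y x = G.dist x y := SimpleGraph.dist_comm
      omega
    by_cases hcase : G.dist x z + 1 = G.dist x y
    · exact absurd (parent_unique hT x hzadj hz₀adj hcase hz₀') hzz₀
    · omega


/-- A branch vertex: three distinct neighbors. -/
def IsBranch (G : SimpleGraph V) (x : V) : Prop :=
  ∃ z₁ z₂ z₃ : V, z₁ ≠ z₂ ∧ z₁ ≠ z₃ ∧ z₂ ≠ z₃ ∧ G.Adj x z₁ ∧ G.Adj x z₂ ∧ G.Adj x z₃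

lemma isBranch_third {x : V} (hx : IsBranch G x) (n₁ n₂ : V) :
    ∃ z, G.Adj x z ∧ z ≠ n₁ ∧ z ≠ n₂ := by
  obtain ⟨z₁, z₂, z₃, h12, h13, h23, a1, a2, a3⟩ := hx
  by_cases e11 : z₁ = n₁
  · by_cases e22 : z₂ = n₂
    · exact ⟨z₃, a3, fun h => h13 (e11.trans h.symm), fun h => h23 (e22.trans h.symm)⟩
    · by_cases e21 : z₂ = n₁
      · exact absurd (e11.trans e21.symm) h12
      · exact ⟨z₂, a2, e21, e22⟩
  · by_cases e12 : z₁ = n₂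
    · by_cases e21 : z₂ = n₁
      · exact ⟨z₃, a3, fun h => h23 (e21.trans h.symm), fun h => h13 (e12.trans h.symm)⟩
      · exact ⟨z₂, a2, e21, fun h => h12 (e12.trans h.symm)⟩
    · exact ⟨z₁, a1, e11, e12⟩

variable {Γ : Type*} [Group Γ] [MulAction Γ V]

/-- Every vertex lies between two branch vertices (minimality + existence of a branch). -/
lemma hull_univ (hT : G.IsTree)
    (hadj : ∀ (g : Γ) (u v : V), G.Adj u v → G.Adj (g • u) (g • v))
    (hd : ∀ (g : Γ) (u v : V), G.dist (g • u) (g • v) = G.dist u v)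
    (hmin : ∀ S : Set V, S.Nonempty → (∀ (g : Γ), ∀ v ∈ S, g • v ∈ S) →
      (G.induce S).Connected → S = Set.univ)
    (hbne : ∃ b, IsBranch G b) :
    ∀ x : V, ∃ b₁ b₂, IsBranch G b₁ ∧ IsBranch G b₂ ∧
      G.dist b₁ x + G.dist x b₂ = G.dist b₁ b₂ := by
  have hc := hT.isConnected
  set S : Set V := {x | ∃ b₁ b₂, IsBranch G b₁ ∧ IsBranch G b₂ ∧
      G.dist b₁ x + G.dist x b₂ = G.dist b₁ b₂} with hS
  obtain ⟨b₀, hb₀⟩ := hbne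
  have hb₀S : b₀ ∈ S := ⟨b₀, b₀, hb₀, hb₀, by simp [SimpleGraph.dist_self]⟩
  have hbS : ∀ b, IsBranch G b → b ∈ S := fun b hb =>
    ⟨b, b, hb, hb, by simp [SimpleGraph.dist_self]⟩
  have hBinv : ∀ (g : Γ) b, IsBranch G b → IsBranch G (g • b) := by
    rintro g b ⟨z₁, z₂, z₃, h12, h13, h23, a1, a2, a3⟩
    exact ⟨g • z₁, g • z₂, g • z₃,
      fun h => h12 (MulAction.injective g h), fun h => h13 (MulAction.injective g h),
      fun h => h23 (MulAction.injective g h), hadj g _ _ a1, hadj g _ _ a2, hadj g _ _ a3⟩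
  -- convexity toward a branch point
  have hconvS : ∀ x b₁ b₂, IsBranch G b₁ → IsBranch G b₂ →
      G.dist b₁ x + G.dist x b₂ = G.dist b₁ b₂ →
      ∀ p, G.dist x p + G.dist p b₁ = G.dist x b₁ → p ∈ S := by
    intro x b₁ b₂ hb₁ hb₂ hx p hp
    refine ⟨b₁, b₂, hb₁, hb₂, ?_⟩
    have c1 : G.dist b₁ p = G.dist p b₁ := SimpleGraph.dist_comm
    have c2 : G.dist b₁ x = G.dist x b₁ := SimpleGraph.dist_comm
    have c3 : G.dist p b₂ ≤ G.dist p x + G.dist x b₂ := hc.dist_triangle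
    have c4 : G.dist p x = G.dist x p := SimpleGraph.dist_comm
    have c5 : G.dist b₁ b₂ ≤ G.dist b₁ p + G.dist p b₂ := hc.dist_triangle
    omega
  have hSuniv : S = Set.univ := by
    apply hmin S ⟨b₀, hb₀S⟩
    · rintro g x ⟨b₁, b₂, hb₁, hb₂, hx⟩
      refine ⟨g • b₁, g • b₂, hBinv g _ hb₁, hBinv g _ hb₂, ?_⟩
      rw [hd, hd, hd]; exact hx
    · rw [connected_iff]
      refine ⟨?_, ⟨⟨b₀, hb₀S⟩⟩⟩
      rintro ⟨x, hx⟩ ⟨y, hy⟩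
      obtain ⟨b₁, b₂, hb₁, hb₂, hxb⟩ := id hx
      obtain ⟨b₁', b₂', hb₁', hb₂', hyb⟩ := id hy
      have r1 : (G.induce S).Reachable ⟨x, hx⟩ ⟨b₁, hbS b₁ hb₁⟩ := by
        apply reach_of_conv hc (G.dist x b₁) x b₁ hx (hbS b₁ hb₁) _ le_rfl
        intro p hp
        exact hconvS x b₁ b₂ hb₁ hb₂ hxb p hp
      have r2 : (G.induce S).Reachable ⟨b₁, hbS b₁ hb₁⟩ ⟨b₁', hbS b₁' hb₁'⟩ := by
        apply reach_of_conv hc (G.dist b₁ b₁') b₁ b₁' _ _ _ le_rfl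
        intro p hp
        refine ⟨b₁, b₁', hb₁, hb₁', ?_⟩
        have c1 : G.dist b₁ p = G.dist p b₁ := SimpleGraph.dist_comm
        omega
      have r3 : (G.induce S).Reachable ⟨y, hy⟩ ⟨b₁', hbS b₁' hb₁'⟩ := by
        apply reach_of_conv hc (G.dist y b₁') y b₁' hy (hbS b₁' hb₁') _ le_rfl
        intro p hp
        exact hconvS y b₁' b₂' hb₁' hb₂' hyb p hp
      exact (r1.trans r2).trans r3.symm
  intro x
  have : x ∈ S := hSuniv ▸ Set.mem_univ x
  exact this

/-- Branch vertices appear beyond every point of every geodesic ray. -/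
lemma branch_cofinal (hT : G.IsTree)
    (hull : ∀ x : V, ∃ b₁ b₂, IsBranch G b₁ ∧ IsBranch G b₂ ∧
      G.dist b₁ x + G.dist x b₂ = G.dist b₁ b₂)
    {u : V} {f : ℕ → V} (hf : ∀ i, G.dist u (f i) = i)
    (hadjf : ∀ i, G.Adj (f i) (f (i + 1))) :
    ∀ M, 1 ≤ M → ∃ a, M ≤ a ∧ IsBranch G (f a) := by
  have hc := hT.isConnected
  intro M hM
  by_cases hbM : IsBranch G (f M)
  · exact ⟨M, le_rfl, hbM⟩
  · obtain ⟨b₁, b₂, hb₁, hb₂, hbetw⟩ := hull (f M)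
    have hxb₁ : f M ≠ b₁ := fun h => hbM (h ▸ hb₁)
    have hxb₂ : f M ≠ b₂ := fun h => hbM (h ▸ hb₂)
    obtain ⟨p₁, hp₁adj, hp₁⟩ := exists_child hc hxb₁
    obtain ⟨p₂, hp₂adj, hp₂⟩ := exists_child hc hxb₂
    have hM1 : M - 1 + 1 = M := by omega
    have hprev : G.Adj (f M) (f (M - 1)) := by
      have := hadjf (M - 1)
      rw [hM1] at this
      exact this.symm
    have hnext : G.Adj (f M) (f (M + 1)) := hadjf M
    have hpneq : f (M - 1) ≠ f (M + 1) := by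
      intro h
      have h1 := hf (M - 1)
      have h2 := hf (M + 1)
      rw [h] at h1
      omega
    have hnbr : ∀ y, G.Adj (f M) y → y = f (M - 1) ∨ y = f (M + 1) := by
      intro y hy
      by_contra hcon
      push_neg at hcon
      exact hbM ⟨f (M - 1), f (M + 1), y, hpneq, (Ne.symm hcon.1), (Ne.symm hcon.2),
        hprev, hnext, hy⟩
    have hp12 : p₁ ≠ p₂ := by
      intro h
      subst h
      have h1 : G.dist b₁ b₂ ≤ G.dist b₁ p₁ + G.dist p₁ b₂ := hc.dist_triangle
      have h2 : G.dist b₁ p₁ = G.dist p₁ b₁ := SimpleGraph.dist_comm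
      have h3 : G.dist b₁ (f M) = G.dist (f M) b₁ := SimpleGraph.dist_comm
      omega
    -- one of the children is f (M+1)
    obtain ⟨b, hbB, hchild⟩ : ∃ b, IsBranch G b ∧ G.dist (f (M + 1)) b + 1 = G.dist (f M) b := by
      rcases hnbr p₁ hp₁adj with h | h
      · rcases hnbr p₂ hp₂adj with h' | h'
        · exact absurd (h.trans h'.symm) hp12
        · exact ⟨b₂, hb₂, h' ▸ hp₂⟩
      · exact ⟨b₁, hb₁, h ▸ hp₁⟩
    set l := G.dist (f M) b with hl
    have hl1 : 1 ≤ l := by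
      rcases Nat.eq_zero_or_pos l with h | h
      · exfalso
        have hfb : f M = b := (hc.dist_eq_zero_iff).mp (by omega)
        exact hbM (by rw [hfb]; exact hbB)
      · exact h
    -- walk along the ray to b
    have hQ : ∀ m, m + 1 ≤ l → (∃ a, M ≤ a ∧ IsBranch G (f a)) ∨
        (G.dist (f (M + m)) b + m = l ∧ G.dist (f (M + m + 1)) b + m + 1 = l) := by
      intro m
      induction m with
      | zero =>
        intro _
        right
        constructor
        · simpa using hl.symm
        · simpa using hchild
      | succ m ihm =>
        intro hm1
        rcases ihm (by omega) with h | ⟨hQ1, hQ2⟩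
        · exact Or.inl h
        · by_cases hbr : IsBranch G (f (M + m + 1))
          · exact Or.inl ⟨M + m + 1, by omega, hbr⟩
          · right
            have hyb : f (M + m + 1) ≠ b := by
              intro h
              rw [h] at hQ2
              have : G.dist b b = 0 := SimpleGraph.dist_self
              omega
            obtain ⟨c, hcadj, hcd⟩ := exists_child hc hyb
            have hprev' : G.Adj (f (M + m + 1)) (f (M + m)) := (hadjf (M + m)).symm
            have hnext' : G.Adj (f (M + m + 1)) (f (M + m + 2)) := by
              have := hadjf (M + m + 1)
              rwa [show M + m + 1 + 1 = M + m + 2 by omega] at this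
            have hpneq' : f (M + m) ≠ f (M + m + 2) := by
              intro h
              have h1 := hf (M + m)
              have h2 := hf (M + m + 2)
              rw [h] at h1
              omega
            have hcnbr : c = f (M + m) ∨ c = f (M + m + 2) := by
              by_contra hcon
              push_neg at hcon
              exact hbr ⟨f (M + m), f (M + m + 2), c, hpneq', Ne.symm hcon.1, Ne.symm hcon.2,
                hprev', hnext', hcadj⟩
            rcases hcnbr with h | h
            · exfalso
              rw [h] at hcd
              omega
            · rw [h] at hcd
              constructor
              · rw [show M + (m+1) = M + m + 1 by omega]; omega
              · rw [show M + (m+1) + 1 = M + m + 2 by omega]; omega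
    rcases hQ (l - 1) (by omega) with h | ⟨h1, h2⟩
    · exact h
    · have : G.dist (f (M + (l - 1) + 1)) b = 0 := by omega
      have hfb : f (M + (l - 1) + 1) = b := (hc.dist_eq_zero_iff).mp this
      exact ⟨M + (l - 1) + 1, by omega, by rw [hfb]; exact hbB⟩


/-- If the tree has no branch vertex, it is a line and general type fails. -/
lemma exists_branch (hT : G.IsTree)
    (hadj : ∀ (g : Γ) (u v : V), G.Adj u v → G.Adj (g • u) (g • v))
    (hd : ∀ (g : Γ) (u v : V), G.dist (g • u) (g • v) = G.dist u v)
    (h2n : ∀ y : V, ∃ z₁ z₂, z₁ ≠ z₂ ∧ G.Adj y z₁ ∧ G.Adj y z₂)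
    (hext : ∀ x y : V, ∃ z, G.Adj y z ∧ G.dist x z = G.dist x y + 1)
    (u : V)
    (hgen : ∃ g₁ g₂ : Γ, Hyperbolic G g₁ ∧ Hyperbolic G g₂ ∧
      ∀ r : ℕ → V, IsRay G r → Cofinal (fun i => g₁ • r i) r →
        ¬ Cofinal (fun i => g₂ • r i) r) :
    ∃ b, IsBranch G b := by
  have hc := hT.isConnected
  by_contra hB
  push_neg at hB
  -- two distinguished neighbors of u
  obtain ⟨w₁, w₂, hw12, hw1, hw2⟩ := h2n u
  -- build two opposite rays
  obtain ⟨r, hrpre, hrd, hra⟩ := mkRay hext u (fun i => if i = 0 then u else w₁) 1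
    (by
      intro i hi
      interval_cases i
      · simp [SimpleGraph.dist_self]
      · simpa using (SimpleGraph.dist_eq_one_iff_adj).mpr hw1)
    (by
      intro i hi
      have : i = 0 := by omega
      subst this
      simpa using hw1)
  obtain ⟨r', hrpre', hrd', hra'⟩ := mkRay hext u (fun i => if i = 0 then u else w₂) 1
    (by
      intro i hi
      interval_cases i
      · simp [SimpleGraph.dist_self]
      · simpa using (SimpleGraph.dist_eq_one_iff_adj).mpr hw2)
    (by
      intro i hi
      have : i = 0 := by omega
      subst this
      simpa using hw2)
  have hr0 : r 0 = u := by simpa using hrpre 0 (by omega)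
  have hr1 : r 1 = w₁ := by simpa using hrpre 1 le_rfl
  have hr0' : r' 0 = u := by simpa using hrpre' 0 (by omega)
  have hr1' : r' 1 = w₂ := by simpa using hrpre' 1 le_rfl
  -- neighbor characterization along r
  have hnbrR : ∀ n y, 1 ≤ n → G.Adj (r n) y → y = r (n - 1) ∨ y = r (n + 1) := by
    intro n y hn hy
    have hprev : G.Adj (r n) (r (n - 1)) := by
      have h := hra (n - 1)
      rw [show n - 1 + 1 = n by omega] at h
      exact h.symm
    have hnext : G.Adj (r n) (r (n + 1)) := hra n
    have hne : r (n - 1) ≠ r (n + 1) := by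
      intro h
      have h1 := hrd (n - 1)
      have h2 := hrd (n + 1)
      rw [h] at h1
      omega
    by_contra hcon
    push_neg at hcon
    exact hB (r n) ⟨r (n - 1), r (n + 1), y, hne, Ne.symm hcon.1, Ne.symm hcon.2,
      hprev, hnext, hy⟩
  have hnbrR' : ∀ n y, 1 ≤ n → G.Adj (r' n) y → y = r' (n - 1) ∨ y = r' (n + 1) := by
    intro n y hn hy
    have hprev : G.Adj (r' n) (r' (n - 1)) := by
      have h := hra' (n - 1)
      rw [show n - 1 + 1 = n by omega] at h
      exact h.symm
    have hnext : G.Adj (r' n) (r' (n + 1)) := hra' n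
    have hne : r' (n - 1) ≠ r' (n + 1) := by
      intro h
      have h1 := hrd' (n - 1)
      have h2 := hrd' (n + 1)
      rw [h] at h1
      omega
    by_contra hcon
    push_neg at hcon
    exact hB (r' n) ⟨r' (n - 1), r' (n + 1), y, hne, Ne.symm hcon.1, Ne.symm hcon.2,
      hprev, hnext, hy⟩
  have hnbrU : ∀ y, G.Adj u y → y = w₁ ∨ y = w₂ := by
    intro y hy
    by_contra hcon
    push_neg at hcon
    exact hB u ⟨w₁, w₂, y, hw12, Ne.symm hcon.1, Ne.symm hcon.2, hw1, hw2, hy⟩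
  -- surjectivity
  have hsurj : ∀ n x, G.dist u x ≤ n → x = r (G.dist u x) ∨ x = r' (G.dist u x) := by
    intro n
    induction n with
    | zero =>
      intro x hx
      left
      have hux : u = x := (hc.dist_eq_zero_iff).mp (by omega)
      subst hux
      have h0 : G.dist u u = 0 := SimpleGraph.dist_self
      rw [h0, hr0]
    | succ n ih =>
      intro x hx
      by_cases hxn : G.dist u x ≤ n
      · exact ih x hxn
      · have hdx : G.dist u x = n + 1 := by omega
        have hxu : x ≠ u := by
          intro h; rw [h] at hdx; simp [SimpleGraph.dist_self] at hdx
        obtain ⟨z, hzadj, hz⟩ := exists_child hc hxu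
        have hdz : G.dist u z = n := by
          have c1 : G.dist z u = G.dist u z := SimpleGraph.dist_comm
          have c2 : G.dist x u = G.dist u x := SimpleGraph.dist_comm
          omega
        rcases ih z (by omega) with hcase | hcase <;> rw [hdz] at hcase
        · -- z = r n
          rcases Nat.eq_zero_or_pos n with hn | hn
          · subst hn
            rw [hr0] at hcase
            subst hcase
            rcases hnbrU x hzadj.symm with h | h
            · left; rw [hdx, show (0:ℕ)+1 = 1 from rfl, hr1]; exact h
            · right; rw [hdx, show (0:ℕ)+1 = 1 from rfl, hr1']; exact h
          · subst hcase
            rcases hnbrR n x hn hzadj.symm with h | h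
            · exfalso
              have := hrd (n - 1)
              rw [← h] at this
              omega
            · left; rw [hdx]; exact h
        · rcases Nat.eq_zero_or_pos n with hn | hn
          · subst hn
            rw [hr0'] at hcase
            subst hcase
            rcases hnbrU x hzadj.symm with h | h
            · left; rw [hdx, show (0:ℕ)+1 = 1 from rfl, hr1]; exact h
            · right; rw [hdx, show (0:ℕ)+1 = 1 from rfl, hr1']; exact h
          · subst hcase
            rcases hnbrR' n x hn hzadj.symm with h | h
            · exfalso
              have := hrd' (n - 1)
              rw [← h] at this
              omega
            · right; rw [hdx]; exact h
  -- the line coordinates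
  set ι : ℤ → V := fun k => if 0 ≤ k then r k.toNat else r' (-k).toNat with hι
  have hι_nonneg : ∀ k : ℤ, 0 ≤ k → ι k = r k.toNat := by
    intro k hk; simp [hι, hk]
  have hι_nat : ∀ m : ℕ, ι (m : ℤ) = r m := by
    intro m; rw [hι_nonneg _ (by positivity)]; simp
  have hι_neg : ∀ k : ℤ, k < 0 → ι k = r' (-k).toNat := by
    intro k hk; simp [hι, not_le.mpr hk]
  have hdiv := seq_div hT hrd hra hrd' hra' 0
    (by intro i hi; interval_cases i; rw [hr0, hr0'])
    (by rw [hr1, hr1']; exact hw12)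
  have hdiv' : ∀ p q, G.dist (r p) (r' q) = p + q := by
    intro p q
    have := hdiv p q
    simpa using this
  have hιdist : ∀ k l : ℤ, G.dist (ι k) (ι l) = (k - l).natAbs := by
    intro k l
    rcases le_or_gt 0 k with hk | hk <;> rcases le_or_gt 0 l with hl | hl
    · rw [hι_nonneg k hk, hι_nonneg l hl]
      rcases le_or_gt k l with h | h
      · have e : l.toNat = k.toNat + (l.toNat - k.toNat) := by omega
        rw [e, seq_dist hc hrd hra]
        omega
      · have e : k.toNat = l.toNat + (k.toNat - l.toNat) := by omega
        rw [SimpleGraph.dist_comm, e, seq_dist hc hrd hra]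
        omega
    · rw [hι_nonneg k hk, hι_neg l hl, hdiv' k.toNat (-l).toNat]
      omega
    · rw [hι_neg k hk, hι_nonneg l hl, SimpleGraph.dist_comm, hdiv' l.toNat (-k).toNat]
      omega
    · rw [hι_neg k hk, hι_neg l hl]
      rcases le_or_gt k l with h | h
      · have e : (-k).toNat = (-l).toNat + ((-k).toNat - (-l).toNat) := by omega
        rw [SimpleGraph.dist_comm, e, seq_dist hc hrd' hra']
        omega
      · have e : (-l).toNat = (-k).toNat + ((-l).toNat - (-k).toNat) := by omega
        rw [e, seq_dist hc hrd' hra']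
        omega
  have hιinj : ∀ k l : ℤ, ι k = ι l → k = l := by
    intro k l h
    have := hιdist k l
    rw [h] at this
    simp [SimpleGraph.dist_self] at this
    omega
  have hιsurj : ∀ x : V, ∃ k : ℤ, ι k = x := by
    intro x
    rcases hsurj (G.dist u x) x le_rfl with h | h
    · exact ⟨(G.dist u x : ℤ), by rw [hι_nat, ← h]⟩
    · rcases Nat.eq_zero_or_pos (G.dist u x) with h0 | h0
      · exact ⟨0, by rw [show ((0:ℤ)) = ((0:ℕ):ℤ) by simp, hι_nat, hr0, (hc.dist_eq_zero_iff).mp h0]⟩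
      · refine ⟨-(G.dist u x : ℤ), ?_⟩
        rw [hι_neg _ (by omega), show (-(-(G.dist u x : ℤ))).toNat = G.dist u x by omega]
        exact h.symm
  have hιadj : ∀ k : ℤ, G.Adj (ι k) (ι (k + 1)) := by
    intro k
    have := hιdist (k + 1) k
    have h1 : ((k : ℤ) + 1 - k).natAbs = 1 := by omega
    rw [h1] at this
    exact ((SimpleGraph.dist_eq_one_iff_adj).mp (by rw [SimpleGraph.dist_comm]; exact this))
  have hιchar : ∀ (k : ℤ) (y : V), G.Adj (ι k) y → y = ι (k - 1) ∨ y = ι (k + 1) := by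
    intro k y hy
    rcases lt_trichotomy k 0 with hk | hk | hk
    · rw [hι_neg k hk] at hy
      have h1 : 1 ≤ (-k).toNat := by omega
      rcases hnbrR' (-k).toNat y h1 hy with h | h
      · right
        rcases eq_or_lt_of_le (show k ≤ -1 by omega) with he | he
        · subst he
          rw [h, show ((-(-1:ℤ)).toNat - 1 : ℕ) = 0 by omega, hr0',
            show (-1 : ℤ) + 1 = ((0:ℕ):ℤ) by norm_num, hι_nat, hr0]
        · rw [hι_neg (k+1) (by omega), h]
          congr 1 <;> omega
      · left
        rw [hι_neg (k-1) (by omega), h]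
        congr 1 <;> omega
    · subst hk
      rw [show ((0:ℤ)) = ((0:ℕ):ℤ) by simp, hι_nat, hr0] at hy
      rcases hnbrU y hy with h | h
      · right
        rw [show (0:ℤ) + 1 = ((1:ℕ):ℤ) by simp, hι_nat, hr1, h]
      · left
        rw [hι_neg ((0:ℤ)-1) (by omega), h, ← hr1']
        congr 1
    · rw [hι_nonneg k (le_of_lt hk)] at hy
      have h1 : 1 ≤ k.toNat := by omega
      rcases hnbrR k.toNat y h1 hy with h | h
      · left
        rw [hι_nonneg (k-1) (by omega), h]
        congr 1 <;> omega
      · right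
        rw [hι_nonneg (k+1) (by omega), h]
        congr 1 <;> omega
  -- every hyperbolic element translates
  have hact : ∀ h : Γ, ∃ c ε : ℤ, (ε = 1 ∨ ε = -1) ∧ ∀ k : ℤ, h • ι k = ι (c + ε * k) := by
    intro h
    obtain ⟨c, hc0⟩ := hιsurj (h • ι 0)
    obtain ⟨ε, hε, hι1⟩ : ∃ ε : ℤ, (ε = 1 ∨ ε = -1) ∧ h • ι 1 = ι (c + ε) := by
      have hadj1 : G.Adj (h • ι 0) (h • ι 1) := by
        apply hadj
        have := hιadj 0
        rwa [show (0 : ℤ) + 1 = 1 by ring] at this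
      rw [← hc0] at hadj1
      rcases hιchar c _ hadj1 with hcase | hcase
      · exact ⟨-1, Or.inr rfl, by rw [hcase]; congr 1 <;> ring⟩
      · exact ⟨1, Or.inl rfl, by rw [hcase]⟩
    refine ⟨c, ε, hε, ?_⟩
    -- two-step recurrences
    have hrec : ∀ k m : ℤ, h • ι k = ι m → h • ι (k + 1) = ι (m + ε) →
        h • ι (k + 2) = ι (m + ε + ε) := by
      intro k m hk hk1
      have hadj2 : G.Adj (h • ι (k + 1)) (h • ι (k + 2)) := by
        apply hadj
        have := hιadj (k + 1)
        rwa [show k + 1 + 1 = k + 2 by ring] at this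
      rw [hk1] at hadj2
      have hbad : h • ι (k + 2) ≠ ι m := by
        intro hb
        have h1 : h • ι (k + 2) = h • ι k := by rw [hb, hk]
        have h2 := hιinj _ _ (MulAction.injective h h1)
        omega
      rcases hε with rfl | rfl
      · rcases hιchar _ _ hadj2 with hcase | hcase
        · exact absurd (by rw [hcase]; all_goals (congr 1 <;> ring)) hbad
        · rw [hcase]; all_goals (congr 1 <;> ring)
      · rcases hιchar _ _ hadj2 with hcase | hcase
        · rw [hcase]; all_goals (congr 1 <;> ring)
        · exact absurd (by rw [hcase]; all_goals (congr 1 <;> ring)) hbad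
    have hrecdown : ∀ k m : ℤ, h • ι k = ι m → h • ι (k + 1) = ι (m + ε) →
        h • ι (k - 1) = ι (m - ε) := by
      intro k m hk hk1
      have hadj2 : G.Adj (h • ι k) (h • ι (k - 1)) := by
        apply hadj
        have := (hιadj (k - 1)).symm
        rwa [show k - 1 + 1 = k by ring] at this
      rw [hk] at hadj2
      have hbad : h • ι (k - 1) ≠ ι (m + ε) := by
        intro hb
        have h1 : h • ι (k - 1) = h • ι (k + 1) := by rw [hb, hk1]
        have h2 := hιinj _ _ (MulAction.injective h h1)
        omega
      rcases hε with rfl | rfl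
      · rcases hιchar _ _ hadj2 with hcase | hcase
        · rw [hcase]; all_goals (congr 1 <;> ring)
        · exact absurd (by rw [hcase]; all_goals (congr 1 <;> ring)) hbad
      · rcases hιchar _ _ hadj2 with hcase | hcase
        · exact absurd (by rw [hcase]; all_goals (congr 1 <;> ring)) hbad
        · rw [hcase]; all_goals (congr 1 <;> ring)
    have hpos : ∀ n : ℕ, h • ι (n : ℤ) = ι (c + ε * n) ∧
        h • ι ((n : ℤ) + 1) = ι (c + ε * n + ε) := by
      intro n
      induction n with
      | zero =>
        constructor
        · rw [show ((0 : ℕ) : ℤ) = 0 by simp, ← hc0]; congr 1 <;> ring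
        · rw [show ((0 : ℕ) : ℤ) + 1 = 1 by simp, hι1]; congr 1 <;> ring
      | succ n ihn =>
        obtain ⟨A, B⟩ := ihn
        constructor
        · rw [show ((n + 1 : ℕ) : ℤ) = (n : ℤ) + 1 by push_cast; ring, B]
          congr 1 <;> (push_cast; ring)
        · have := hrec (n : ℤ) (c + ε * n) A B
          rw [show ((n + 1 : ℕ) : ℤ) + 1 = (n : ℤ) + 2 by push_cast; ring, this]
          congr 1 <;> (push_cast; ring)
    have hneg : ∀ n : ℕ, h • ι (-(n : ℤ)) = ι (c - ε * n) ∧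
        h • ι (-(n : ℤ) + 1) = ι (c - ε * n + ε) := by
      intro n
      induction n with
      | zero =>
        constructor
        · rw [show -((0 : ℕ) : ℤ) = 0 by simp, ← hc0]; congr 1 <;> ring
        · rw [show -((0 : ℕ) : ℤ) + 1 = 1 by simp, hι1]; congr 1 <;> ring
      | succ n ihn =>
        obtain ⟨A, B⟩ := ihn
        constructor
        · have := hrecdown (-(n : ℤ)) (c - ε * n) A B
          rw [show -((n + 1 : ℕ) : ℤ) = -(n : ℤ) - 1 by push_cast; ring, this]
          congr 1 <;> (push_cast; ring)
        · rw [show -((n + 1 : ℕ) : ℤ) + 1 = -(n : ℤ) by push_cast; ring, A]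
          congr 1 <;> (push_cast; ring)
    intro k
    rcases le_or_gt 0 k with hk | hk
    · have := (hpos k.toNat).1
      rwa [show ((k.toNat : ℕ) : ℤ) = k by omega] at this
    · have h1 := (hneg (-k).toNat).1
      have e1 : -(((-k).toNat : ℕ) : ℤ) = k := by omega
      have e2 : c - ε * (((-k).toNat : ℕ) : ℤ) = c + ε * k := by
        have e3 : (((-k).toNat : ℕ) : ℤ) = -k := by omega
        rw [e3]; ring
      rw [e1, e2] at h1
      exact h1
  -- translations must be positive-direction (else hyperbolicity fails)
  have hε1 : ∀ h : Γ, Hyperbolic G h → ∀ c ε : ℤ, (ε = 1 ∨ ε = -1) →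
      (∀ k : ℤ, h • ι k = ι (c + ε * k)) → ∀ k : ℤ, h • ι k = ι (c + k) := by
    intro h hhyp c ε hε hk
    rcases hε with rfl | rfl
    · intro k
      rw [hk k]; congr 1 <;> ring
    · exfalso
      rcases Int.even_or_odd c with ⟨t, ht⟩ | ⟨t, ht⟩
      · have hfix : h • ι t = ι t := by rw [hk t]; congr 1 <;> omega
        exact hhyp.1 (ι t) hfix
      · have h1 : h • ι t = ι (t + 1) := by rw [hk t]; congr 1 <;> omega
        have h2 : h • ι (t + 1) = ι t := by rw [hk (t + 1)]; congr 1 <;> omega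
        exact hhyp.2 (ι t) (ι (t + 1)) (hιadj t) ⟨h1, h2⟩
  -- translations act cofinally on the ray r
  have hcof : ∀ (h : Γ) (c : ℤ), (∀ k : ℤ, h • ι k = ι (c + k)) →
      Cofinal (fun i => h • r i) r := by
    intro h c hk
    refine ⟨(-c).toNat, (c + (-c).toNat).toNat, ?_⟩
    intro i
    have h1 : h • ι ((i + (-c).toNat : ℕ) : ℤ) = ι (c + ((i + (-c).toNat : ℕ) : ℤ)) := hk _
    rw [hι_nat] at h1
    simp only []
    rw [h1, show (c + ((i + (-c).toNat : ℕ) : ℤ)) = (((i + (c + (-c).toNat).toNat : ℕ)) : ℤ) by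
      push_cast; omega, hι_nat]
  -- contradiction with general type
  obtain ⟨g₁, g₂, hg₁, hg₂, htrans⟩ := hgen
  obtain ⟨c₁, ε₁, hε₁, hk₁⟩ := hact g₁
  obtain ⟨c₂, ε₂, hε₂, hk₂⟩ := hact g₂
  have hray : IsRay G r := fun i n => seq_dist hc hrd hra i n
  exact htrans r hray (hcof g₁ c₁ (hε1 g₁ hg₁ c₁ ε₁ hε₁ hk₁))
    (hcof g₂ c₂ (hε1 g₂ hg₂ c₂ ε₂ hε₂ hk₂))


-- ## Quotient utilities

lemma cofinal_refl (r : ℕ → V) : Cofinal r r := ⟨0, 0, fun _ => rfl⟩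

lemma cofinal_symm {r s : ℕ → V} (h : Cofinal r s) : Cofinal s r := by
  obtain ⟨k, n, hkn⟩ := h
  exact ⟨n, k, fun i => (hkn i).symm⟩

lemma cofinal_trans {r s t : ℕ → V} (h1 : Cofinal r s) (h2 : Cofinal s t) :
    Cofinal r t := by
  obtain ⟨k, n, hkn⟩ := h1
  obtain ⟨k', n', hkn'⟩ := h2
  refine ⟨k + k', n + n', fun i => ?_⟩
  have e1 : i + (k + k') = i + k' + k := by omega
  have e2 : i + k' + n = i + n + k' := by omega
  have e3 : i + n + n' = i + (n + n') := by omega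
  rw [e1, hkn (i + k'), e2, hkn' (i + n), e3]

lemma cofinal_equiv :
    Equivalence (fun r s : {r : ℕ → V // IsRay G r} => Cofinal r.1 s.1) :=
  ⟨fun r => cofinal_refl r.1, fun h => cofinal_symm h, fun h1 h2 => cofinal_trans h1 h2⟩

lemma cofinal_of_mk_eq {a b : {r : ℕ → V // IsRay G r}}
    (h : (Quot.mk (fun r s : {r : ℕ → V // IsRay G r} => Cofinal r.1 s.1) a) = Quot.mk _ b) :
    Cofinal a.1 b.1 :=
  (cofinal_equiv.eqvGen_iff).mp (Quot.eq.mp h)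

lemma mk_mem_ZB {u v : V} (f : ℕ → V) (hf : IsRay G f) (h0 : f 0 = u) (h1 : f 1 = v) :
    (Quot.mk _ (⟨f, hf⟩ : {r : ℕ → V // IsRay G r}) : Boundary G) ∈ ZB G u v :=
  ⟨⟨f, hf⟩, rfl, f, hf, cofinal_refl f, 0, h0, by simpa using h1⟩

lemma fix_to_cofinal {Γ : Type*} [Group Γ] [MulAction Γ V]
    (hd : ∀ (g : Γ) (u v : V), G.dist (g • u) (g • v) = G.dist u v) (γ : Γ) {u v : V}
    (hfix : ∀ x ∈ ZB G u v, bAct G hd γ x = x)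
    (f : ℕ → V) (hf : IsRay G f) (h0 : f 0 = u) (h1 : f 1 = v) :
    Cofinal (fun i => γ • f i) f := by
  have hx := hfix _ (mk_mem_ZB f hf h0 h1)
  have hx' : (Quot.mk (fun r s : {r : ℕ → V // IsRay G r} => Cofinal r.1 s.1)
      (rayAct G hd γ ⟨f, hf⟩)) = Quot.mk _ (⟨f, hf⟩ : {r : ℕ → V // IsRay G r}) := hx
  exact cofinal_of_mk_eq hx'

-- ## Geometry helpers tied to a base ray

lemma third_dist (hT : G.IsTree) {u : V} {f : ℕ → V} (hf : ∀ i, G.dist u (f i) = i)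
    (hadjf : ∀ i, G.Adj (f i) (f (i + 1)))
    (a : ℕ) (ha : 1 ≤ a) {z : V} (hzadj : G.Adj (f a) z) (hz1 : z ≠ f (a - 1)) :
    G.dist u z = a + 1 := by
  have hc := hT.isConnected
  have hprev : G.Adj (f a) (f (a - 1)) := by
    have h := hadjf (a - 1)
    rw [show a - 1 + 1 = a by omega] at h
    exact h.symm
  have hne : G.dist u z ≠ a := by
    have h := adj_dist_ne hT u hzadj
    rw [hf a] at h
    exact fun hh => h hh.symm
  have ht1 : G.dist u z ≤ G.dist u (f a) + G.dist (f a) z := hc.dist_triangle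
  have ht2 : G.dist u (f a) ≤ G.dist u z + G.dist z (f a) := hc.dist_triangle
  have hd1 : G.dist (f a) z ≤ 1 := by simpa using SimpleGraph.dist_le hzadj.toWalk
  have hd2 : G.dist z (f a) ≤ 1 := by rw [SimpleGraph.dist_comm]; exact hd1
  rw [hf a] at ht1 ht2
  by_cases hcase : G.dist u z + 1 = a
  · exact absurd (parent_unique hT u hzadj hprev (by rw [hf a]; exact hcase)
      (by rw [hf a, hf (a - 1)]; omega)) hz1
  · omega

lemma branch_ray (hT : G.IsTree)
    (hext : ∀ x y : V, ∃ z, G.Adj y z ∧ G.dist x z = G.dist x y + 1)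
    {u : V} {f : ℕ → V} (hf : ∀ i, G.dist u (f i) = i)
    (hadjf : ∀ i, G.Adj (f i) (f (i + 1))) (a : ℕ) (ha : 1 ≤ a)
    {z : V} (hzadj : G.Adj (f a) z) (hz1 : z ≠ f (a - 1)) :
    ∃ t : ℕ → V, (∀ i, i ≤ a → t i = f i) ∧ t (a + 1) = z ∧
      (∀ i, G.dist u (t i) = i) ∧ (∀ i, G.Adj (t i) (t (i + 1))) := by
  have hdz : G.dist u z = a + 1 := third_dist hT hf hadjf a ha hzadj hz1
  obtain ⟨t, htpre, htd, hta⟩ := mkRay hext u (fun i => if i ≤ a then f i else z) (a + 1)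
    (by
      intro i hi
      by_cases h : i ≤ a
      · simp [h]; exact hf i
      · have : i = a + 1 := by omega
        subst this
        simp only [h, if_false]
        exact hdz)
    (by
      intro i hi
      by_cases h : i + 1 ≤ a
      · simp [h, le_of_lt (Nat.lt_of_succ_le h)]
        exact hadjf i
      · have : i = a := by omega
        subst this
        simp only [le_rfl, if_true, h, if_false]
        exact hzadj)
  refine ⟨t, ?_, ?_, htd, hta⟩
  · intro i hi
    rw [htpre i (by omega)]
    simp [hi]
  · rw [htpre (a + 1) le_rfl]
    simp

lemma pair_rel {Γ : Type*} [Group Γ] [MulAction Γ V] (hT : G.IsTree)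
    (hd : ∀ (g : Γ) (u v : V), G.dist (g • u) (g • v) = G.dist u v)
    {u : V} {f f' : ℕ → V}
    (hf : ∀ i, G.dist u (f i) = i) (hadjf : ∀ i, G.Adj (f i) (f (i + 1)))
    (hf' : ∀ i, G.dist u (f' i) = i) (hadjf' : ∀ i, G.Adj (f' i) (f' (i + 1)))
    (m : ℕ) (hag : ∀ i ≤ m, f i = f' i) (hdiv : f (m + 1) ≠ f' (m + 1))
    (γ : Γ) (k n k' n' : ℕ)
    (hcf : ∀ i, γ • f (i + k) = f (i + n)) (hcf' : ∀ i, γ • f' (i + k') = f' (i + n')) :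
    k + k' = n + n' := by
  have hdd := seq_div hT hf hadjf hf' hadjf' m hag hdiv
  have h1 : G.dist (γ • f (m + k)) (γ • f' (m + k')) = G.dist (f (m + k)) (f' (m + k')) :=
    hd γ _ _
  rw [hcf m, hcf' m, hdd n n', hdd k k'] at h1
  omega

open Classical in
/-- Geodesic sequence from `u` toward `w`. -/
noncomputable def geoSeq (hc : G.Connected) (u w : V) : ℕ → V := fun n =>
  Nat.rec u (fun _ y => if h : y = w then y else (exists_child hc h).choose) n

lemma geoSeq_zero (hc : G.Connected) (u w : V) : geoSeq hc u w 0 = u := rfl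

open Classical in
lemma geoSeq_succ (hc : G.Connected) (u w : V) (i : ℕ) : geoSeq hc u w (i + 1) =
    if h : geoSeq hc u w i = w then geoSeq hc u w i else (exists_child hc h).choose := rfl

-- ## Main lemma: fixing ZB pointwise forces fixing Z0 pointwise

lemma main_fix {Γ : Type*} [Group Γ] [MulAction Γ V] (hT : G.IsTree)
    (hadj : ∀ (g : Γ) (u v : V), G.Adj u v → G.Adj (g • u) (g • v))
    (hd : ∀ (g : Γ) (u v : V), G.dist (g • u) (g • v) = G.dist u v)
    (hmin : ∀ S : Set V, S.Nonempty → (∀ (g : Γ), ∀ v ∈ S, g • v ∈ S) →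
      (G.induce S).Connected → S = Set.univ)
    (hgen : ∃ g₁ g₂ : Γ, Hyperbolic G g₁ ∧ Hyperbolic G g₂ ∧
      ∀ r : ℕ → V, IsRay G r → Cofinal (fun i => g₁ • r i) r →
        ¬ Cofinal (fun i => g₂ • r i) r)
    (u v : V) (he : G.Adj u v) (γ : Γ)
    (hfix : ∀ x ∈ ZB G u v, bAct G hd γ x = x) :
    ∀ w ∈ Z0 G u v, γ • w = w := by
  classical
  have hc := hT.isConnected
  obtain ⟨g₁, g₂, hg₁, hg₂, htrans⟩ := id hgen
  have h2n := two_nbrs hT hadj hmin u v he g₁ hg₁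
  have hext := hext_of_two_nbrs hT h2n
  have hbne := exists_branch hT hadj hd h2n hext u hgen
  have hull := hull_univ hT hadj hd hmin hbne
  intro w hw
  have hw' : G.dist w v < G.dist w u := hw
  have hvu : G.dist v u = 1 := by simp [he.symm]
  have hD : G.dist v w + 1 = G.dist u w := by
    have t1 : G.dist w u ≤ G.dist w v + G.dist v u := hc.dist_triangle
    have t2 : G.dist w v ≤ G.dist w u + G.dist u v := hc.dist_triangle
    have c1 : G.dist w u = G.dist u w := SimpleGraph.dist_comm
    have c2 : G.dist w v = G.dist v w := SimpleGraph.dist_comm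
    omega
  set D := G.dist u w with hDdef
  have hD1 : 1 ≤ D := by omega
  -- geodesic from u to w
  set cseq : ℕ → V := geoSeq hc u w with hcseqdef
  have hc0 : cseq 0 = u := geoSeq_zero hc u w
  have hcstep : ∀ i, cseq (i + 1) =
      if h : cseq i = w then cseq i else (exists_child hc h).choose := fun i =>
    geoSeq_succ hc u w i
  have hcinv : ∀ i, i ≤ D → G.dist u (cseq i) = i ∧ G.dist (cseq i) w + i = D := by
    intro i
    induction i with
    | zero =>
      intro _
      constructor
      · rw [hc0]; exact SimpleGraph.dist_self
      · rw [hc0]; omega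
    | succ i ihi =>
      intro hi
      obtain ⟨ih1, ih2⟩ := ihi (by omega)
      have hcw : cseq i ≠ w := by
        intro h
        rw [h] at ih2
        have : G.dist w w = 0 := SimpleGraph.dist_self
        omega
      have hch := (exists_child hc hcw).choose_spec
      have hcs : cseq (i + 1) = (exists_child hc hcw).choose := by
        rw [hcstep i]
        simp [hcw]
      rw [hcs]
      constructor
      · have t1 : G.dist u (exists_child hc hcw).choose ≤
            G.dist u (cseq i) + G.dist (cseq i) (exists_child hc hcw).choose := hc.dist_triangle
        have t2 : G.dist u w ≤ G.dist u (exists_child hc hcw).choose +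
            G.dist (exists_child hc hcw).choose w := hc.dist_triangle
        have hd1 : G.dist (cseq i) (exists_child hc hcw).choose ≤ 1 := by
          simpa using SimpleGraph.dist_le hch.1.toWalk
        omega
      · omega
  have hcadj : ∀ i, i + 1 ≤ D → G.Adj (cseq i) (cseq (i + 1)) := by
    intro i hi
    have hcw : cseq i ≠ w := by
      intro h
      have := (hcinv i (by omega)).2
      rw [h] at this
      have h0 : G.dist w w = 0 := SimpleGraph.dist_self
      omega
    have hcs : cseq (i + 1) = (exists_child hc hcw).choose := by
      rw [hcstep i]; simp [hcw]
    rw [hcs]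
    exact (exists_child hc hcw).choose_spec.1
  obtain ⟨r, hrpre, hrd, hra⟩ := mkRay hext u cseq D (fun i hi => (hcinv i hi).1) hcadj
  have hr0 : r 0 = u := by rw [hrpre 0 (by omega), hc0]
  have hrD : r D = w := by
    rw [hrpre D le_rfl]
    have := (hcinv D le_rfl).2
    exact (hc.dist_eq_zero_iff).mp (by omega)
  have hr1 : r 1 = v := by
    rw [hrpre 1 hD1]
    have hcw : cseq 0 ≠ w := by
      intro h
      have := (hcinv 0 (by omega)).2
      rw [h] at this
      have h0 : G.dist w w = 0 := SimpleGraph.dist_self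
      omega
    have hcs : cseq 1 = (exists_child hc hcw).choose := by
      have h := hcstep 0
      norm_num at h
      rw [h]
      simp [hcw]
    have hch := (exists_child hc hcw).choose_spec
    have hadj1 : G.Adj u (cseq 1) := by
      rw [← hc0, hcs]
      exact hch.1
    have hd00 : G.dist (cseq 0) w + 0 = D := (hcinv 0 (by omega)).2
    have hdist1 : G.dist (cseq 1) w + 1 = D := by
      rw [hcs]
      have h2 := hch.2
      omega
    apply parent_unique hT w hadj1 he
    · have c1 : G.dist w (cseq 1) = G.dist (cseq 1) w := SimpleGraph.dist_comm
      have c2 : G.dist w u = G.dist u w := SimpleGraph.dist_comm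
      omega
    · have c2 : G.dist w u = G.dist u w := SimpleGraph.dist_comm
      have c3 : G.dist w v = G.dist v w := SimpleGraph.dist_comm
      omega
  have hrayr : IsRay G r := fun i n => seq_dist hc hrd hra i n
  -- first branch at a ≥ 1
  obtain ⟨a, ha1, hba⟩ := branch_cofinal hT hull hrd hra 1 le_rfl
  obtain ⟨z, hzadj, hz1, hz2⟩ := isBranch_third hba (r (a - 1)) (r (a + 1))
  obtain ⟨r₂, hr₂pre, hr₂top, hr₂d, hr₂a⟩ := branch_ray hT hext hrd hra a ha1 hzadj hz1
  -- second branch at a' > a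
  obtain ⟨a', ha'1, hba'⟩ := branch_cofinal hT hull hrd hra (a + 1) (by omega)
  obtain ⟨z', hz'adj, hz'1, hz'2⟩ := isBranch_third hba' (r (a' - 1)) (r (a' + 1))
  obtain ⟨t, htpre, httop, htd, hta⟩ := branch_ray hT hext hrd hra a' (by omega) hz'adj hz'1
  have hrayr₂ : IsRay G r₂ := fun i n => seq_dist hc hr₂d hr₂a i n
  have hrayt : IsRay G t := fun i n => seq_dist hc htd hta i n
  have hr₂0 : r₂ 0 = u := by rw [hr₂pre 0 (by omega), hr0]
  have hr₂1 : r₂ 1 = v := by rw [hr₂pre 1 ha1, hr1]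
  have ht0 : t 0 = u := by rw [htpre 0 (by omega), hr0]
  have ht1 : t 1 = v := by rw [htpre 1 (by omega), hr1]
  obtain ⟨k₁, n₁, hcf₁⟩ := fix_to_cofinal hd γ hfix r hrayr hr0 hr1
  obtain ⟨k₂, n₂, hcf₂⟩ := fix_to_cofinal hd γ hfix r₂ hrayr₂ hr₂0 hr₂1
  obtain ⟨k₃, n₃, hcf₃⟩ := fix_to_cofinal hd γ hfix t hrayt ht0 ht1
  -- divergences
  have hdiv12 : r (a + 1) ≠ r₂ (a + 1) := by
    rw [hr₂top]
    exact fun h => hz2 h.symm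
  have hdiv13 : r (a' + 1) ≠ t (a' + 1) := by
    rw [httop]
    exact fun h => hz'2 h.symm
  have hdiv23 : r₂ (a + 1) ≠ t (a + 1) := by
    rw [hr₂top, htpre (a + 1) (by omega)]
    exact hz2
  have hag12 : ∀ i ≤ a, r i = r₂ i := fun i hi => (hr₂pre i hi).symm
  have hag13 : ∀ i ≤ a', r i = t i := fun i hi => (htpre i hi).symm
  have hag23 : ∀ i ≤ a, r₂ i = t i := fun i hi => by
    rw [hr₂pre i hi, htpre i (by omega)]
  have e₁ := pair_rel hT hd hrd hra hr₂d hr₂a a hag12 hdiv12 γ k₁ n₁ k₂ n₂ hcf₁ hcf₂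
  have e₂ := pair_rel hT hd hrd hra htd hta a' hag13 hdiv13 γ k₁ n₁ k₃ n₃ hcf₁ hcf₃
  have e₃ := pair_rel hT hd hr₂d hr₂a htd hta a hag23 hdiv23 γ k₂ n₂ k₃ n₃ hcf₂ hcf₃
  have hk₁n₁ : n₁ = k₁ := by omega
  have htail : ∀ i, γ • r (i + k₁) = r (i + k₁) := by
    intro i
    have := hcf₁ i
    rwa [hk₁n₁] at this
  -- downward induction
  have hdesc : ∀ m j, 1 ≤ j → k₁ ≤ j + m → γ • r j = r j := by
    intro m
    induction m with
    | zero =>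
      intro j hj hk
      have := htail (j - k₁)
      rwa [show j - k₁ + k₁ = j by omega] at this
    | succ m ih =>
      intro j hj hk
      by_cases hk' : k₁ ≤ j + m
      · exact ih j hj hk'
      · have h1 : γ • r (j + 1) = r (j + 1) := ih (j + 1) (by omega) (by omega)
        have h2 : γ • r (j + 2) = r (j + 2) := ih (j + 2) (by omega) (by omega)
        by_contra hne
        have hxadj : G.Adj (r (j + 1)) (γ • r j) := by
          have h := hadj γ _ _ (hra j)
          rw [h1] at h
          exact h.symm
        have hxne2 : γ • r j ≠ r (j + 2) := by
          intro hxe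
          have hd2 : G.dist (γ • r j) (γ • r (j + 2)) = G.dist (r j) (r (j + 2)) := hd γ _ _
          rw [h2, hxe] at hd2
          have hds : G.dist (r (j + 2)) (r (j + 2)) = 0 := SimpleGraph.dist_self
          have hr2 : G.dist (r j) (r (j + 2)) = 2 := seq_dist hc hrd hra j 2
          omega
        have hxne1 : γ • r j ≠ r ((j + 1) - 1) := by
          rw [show (j + 1) - 1 = j by omega]
          exact hne
        obtain ⟨t', ht'pre, ht'top, ht'd, ht'a⟩ :=
          branch_ray hT hext hrd hra (j + 1) (by omega) hxadj hxne1
        have hrayt' : IsRay G t' := fun i n => seq_dist hc ht'd ht'a i n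
        have ht'0 : t' 0 = u := by rw [ht'pre 0 (by omega), hr0]
        have ht'1 : t' 1 = v := by rw [ht'pre 1 (by omega), hr1]
        obtain ⟨k₄, n₄, hcf₄⟩ := fix_to_cofinal hd γ hfix t' hrayt' ht'0 ht'1
        have hdiv14 : r ((j + 1) + 1) ≠ t' ((j + 1) + 1) := by
          rw [ht'top, show (j + 1) + 1 = j + 2 by omega]
          exact fun h => hxne2 h.symm
        have hag14 : ∀ i ≤ j + 1, r i = t' i := fun i hi => (ht'pre i hi).symm
        have e₄ := pair_rel hT hd hrd hra ht'd ht'a (j + 1) hag14 hdiv14 γ k₁ n₁ k₄ n₄ hcf₁ hcf₄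
        have hk₄n₄ : n₄ = k₄ := by omega
        have ht'fix : γ • t' ((j + 2) + k₄) = t' ((j + 2) + k₄) := by
          have := hcf₄ (j + 2)
          rwa [hk₄n₄] at this
        -- distance computed two ways
        have hI1 : G.dist (γ • r j) (t' ((j + 2) + k₄)) = k₄ := by
          have hh : γ • r j = t' (j + 2) := by
            rw [show j + 2 = (j + 1) + 1 by omega, ht'top]
          rw [hh]
          exact seq_dist hc ht'd ht'a (j + 2) k₄
        have hI2 : G.dist (γ • r j) (t' ((j + 2) + k₄)) = k₄ + 2 := by
          calc G.dist (γ • r j) (t' ((j + 2) + k₄))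
              = G.dist (γ • r j) (γ • t' ((j + 2) + k₄)) := by rw [ht'fix]
            _ = G.dist (r j) (t' ((j + 2) + k₄)) := hd γ _ _
            _ = G.dist (t' j) (t' ((j + 2) + k₄)) := by rw [← ht'pre j (by omega)]
            _ = k₄ + 2 := by
                have := seq_dist hc ht'd ht'a j (k₄ + 2)
                rwa [show j + (k₄ + 2) = (j + 2) + k₄ by omega] at this
        omega
  have hfinal : γ • r D = r D := hdesc k₁ D hD1 (by omega)
  rwa [hrD] at hfinal

-- ## Easy direction: fixing Z0 pointwise fixes ZB pointwise

lemma fixZ0_to_fixZB {Γ : Type*} [Group Γ] [MulAction Γ V]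
    (hd : ∀ (g : Γ) (u v : V), G.dist (g • u) (g • v) = G.dist u v)
    (u v : V) (γ : Γ) (h0 : ∀ w ∈ Z0 G u v, γ • w = w) :
    ∀ x ∈ ZB G u v, bAct G hd γ x = x := by
  rintro x ⟨⟨f, hf⟩, rfl, s, hs, hcof, j, hj0, hj1⟩
  have htail : ∀ i, γ • s (j + 1 + i) = s (j + 1 + i) := by
    intro i
    apply h0
    show G.dist (s (j + 1 + i)) v < G.dist (s (j + 1 + i)) u
    have d1 : G.dist (s (j + 1)) (s (j + 1 + i)) = i := hs (j + 1) i
    have d2 : G.dist (s j) (s (j + 1 + i)) = 1 + i := by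
      have := hs j (1 + i)
      rwa [show j + (1 + i) = j + 1 + i by omega] at this
    have c1 : G.dist (s (j + 1 + i)) (s (j + 1)) = G.dist (s (j + 1)) (s (j + 1 + i)) :=
      SimpleGraph.dist_comm
    have c2 : G.dist (s (j + 1 + i)) (s j) = G.dist (s j) (s (j + 1 + i)) :=
      SimpleGraph.dist_comm
    rw [← hj0, ← hj1]
    omega
  have hcof2 : Cofinal (fun i => γ • s i) s :=
    ⟨j + 1, j + 1, fun i => by
      have := htail i
      rwa [show j + 1 + i = i + (j + 1) by omega] at this⟩
  show Quot.mk _ (rayAct G hd γ ⟨f, hf⟩) = Quot.mk _ (⟨f, hf⟩ : {r : ℕ → V // IsRay G r})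
  have hsr : IsRay G s := hs
  have h1 : Quot.mk (fun r s : {r : ℕ → V // IsRay G r} => Cofinal r.1 s.1)
      (rayAct G hd γ ⟨f, hf⟩) = Quot.mk _ (rayAct G hd γ ⟨s, hsr⟩) := by
    apply Quot.sound
    obtain ⟨k, n, hkn⟩ := hcof
    exact ⟨k, n, fun i => congrArg (fun y => γ • y) (hkn i)⟩
  have h2 : Quot.mk (fun r s : {r : ℕ → V // IsRay G r} => Cofinal r.1 s.1)
      (rayAct G hd γ ⟨s, hsr⟩) = Quot.mk _ (⟨s, hsr⟩ : {r : ℕ → V // IsRay G r}) :=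
    Quot.sound hcof2
  have h3 : Quot.mk (fun r s : {r : ℕ → V // IsRay G r} => Cofinal r.1 s.1)
      (⟨s, hsr⟩ : {r : ℕ → V // IsRay G r}) = Quot.mk _ (⟨f, hf⟩ : {r : ℕ → V // IsRay G r}) :=
    Quot.sound (cofinal_symm hcof)
  exact (h1.trans h2).trans h3

end Stmt18Aux

open Stmt18Aux

theorem stmt_18 {V Γ : Type*} [Group Γ] [MulAction Γ V] (G : SimpleGraph V)
    (hT : G.IsTree)
    (hadj : ∀ (g : Γ) (u v : V), G.Adj u v → G.Adj (g • u) (g • v))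
    (hd : ∀ (g : Γ) (u v : V), G.dist (g • u) (g • v) = G.dist u v)
    (hmin : ∀ S : Set V, S.Nonempty → (∀ (g : Γ), ∀ v ∈ S, g • v ∈ S) →
      (G.induce S).Connected → S = Set.univ)
    (hgen : ∃ g₁ g₂ : Γ, Hyperbolic G g₁ ∧ Hyperbolic G g₂ ∧
      ∀ r : ℕ → V, IsRay G r → Cofinal (fun i => g₁ • r i) r →
        ¬ Cofinal (fun i => g₂ • r i) r)
    (u v : V) (he : G.Adj u v) (g : Γ)
    (hfix : ∀ x ∈ ZB G u v, bAct G hd g x = x) :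
    (∀ x ∈ Z G u v, extAct G hd g x = x) ∧
    {γ : Γ | ∀ w ∈ Z0 G u v, γ • w = w} = {γ : Γ | ∀ x ∈ ZB G u v, bAct G hd γ x = x} ∧
    {γ : Γ | ∀ w ∈ Z0 G u v, γ • w = w} =
      {γ : Γ | ∀ x ∈ Z G u v ∩
          (@closure (Ext G) (shadowTopology G) (Set.range (Sum.inr : Boundary G → Ext G))),
        extAct G hd γ x = x} := by
  have hmain : ∀ γ : Γ, (∀ x ∈ ZB G u v, bAct G hd γ x = x) → ∀ w ∈ Z0 G u v, γ • w = w :=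
    fun γ h => main_fix hT hadj hd hmin hgen u v he γ h
  refine ⟨?_, ?_, ?_⟩
  · rintro x (⟨w, hw, rfl⟩ | ⟨b, hb, rfl⟩)
    · show (Sum.inl (g • w) : Ext G) = Sum.inl w
      rw [hmain g hfix w hw]
    · show (Sum.inr (bAct G hd g b) : Ext G) = Sum.inr b
      rw [hfix b hb]
  · ext γ
    simp only [Set.mem_setOf_eq]
    exact ⟨fun h => fixZ0_to_fixZB hd u v γ h, fun h => hmain γ h⟩
  · ext γ
    simp only [Set.mem_setOf_eq]
    constructor
    · rintro h x ⟨(⟨w, hw, rfl⟩ | ⟨b, hb, rfl⟩), _⟩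
      · show (Sum.inl (γ • w) : Ext G) = Sum.inl w
        rw [h w hw]
      · show (Sum.inr (bAct G hd γ b) : Ext G) = Sum.inr b
        rw [fixZ0_to_fixZB hd u v γ h b hb]
    · intro h
      apply hmain γ
      intro b hb
      have hsub : (Set.range (Sum.inr : Boundary G → Ext G)) ⊆
          (@closure (Ext G) (shadowTopology G) (Set.range (Sum.inr : Boundary G → Ext G))) := by
        letI : TopologicalSpace (Ext G) := shadowTopology G
        letI : TopologicalSpace (V ⊕ Boundary G) := shadowTopology G
        exact subset_closure
      have hmem : (Sum.inr b : Ext G) ∈ Z G u v ∩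
          (@closure (Ext G) (shadowTopology G) (Set.range (Sum.inr : Boundary G → Ext G))) :=
        ⟨Or.inr ⟨b, hb, rfl⟩, hsub (Set.mem_range_self b)⟩
      have hthis := h _ hmem
      have : Sum.inr (bAct G hd γ b) = (Sum.inr b : Ext G) := hthis
      exact Sum.inr_injective this
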